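/- If f(N) = N^{3/2} (rounded to an integer), then the limsup as N → ∞ of the probability that a uniformly random labelling of the pairs of an N-vertex set with f(N) labels is (2,2)-free is at most 2/3. -/

import Mathlib

open Filter Finset
open scoped Classical

/-- Defining pairs: unordered pairs of distinct vertices of `Fin N`. -/
abbrev DefPair (N : ℕ) := {p : Sym2 (Fin N) // ¬ p.IsDiag}

/-- Edge-labellings of the complete graph on `N` vertices with `M` labels;
label `0` is the distinguished label (`2`). -/
abbrev Labelling (N M : ℕ) := DefPair N → Fin M

/-- A labelling is (2,2)-free if no two distinct pairs sharing a vertex both carry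
the distinguished label. -/
def TwoTwoFree {N M : ℕ} (Γ : Labelling N M) : Prop :=
  ∀ p q : DefPair N, (Γ p : ℕ) = 0 → (Γ q : ℕ) = 0 → p ≠ q →
    ∀ v : Fin N, v ∈ p.1 → v ∉ q.1

namespace TTF


variable {N M : ℕ}

/-- admissible ordered pairs of distinct, vertex-sharing defining pairs -/
noncomputable def Adm (N : ℕ) : Finset (DefPair N × DefPair N) :=
  univ.filter fun a => a.1 ≠ a.2 ∧ ∃ v : Fin N, v ∈ a.1.1 ∧ v ∈ a.2.1

noncomputable def X (M : ℕ) (Γ : Labelling N M) : ℕ :=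
  ∑ a ∈ Adm N, if (Γ a.1 : ℕ) = 0 ∧ (Γ a.2 : ℕ) = 0 then 1 else 0

lemma card_zero_on (hM : M ≠ 0) (S : Finset (DefPair N)) :
    (univ.filter fun Γ : Labelling N M => ∀ e ∈ S, (Γ e : ℕ) = 0).card
      = M ^ (Fintype.card (DefPair N) - S.card) := by
  haveI : NeZero M := ⟨hM⟩
  have h : (univ.filter fun Γ : Labelling N M => ∀ e ∈ S, (Γ e : ℕ) = 0)
      = Fintype.piFinset (fun e : DefPair N =>
          if e ∈ S then ({0} : Finset (Fin M)) else univ) := by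
    ext Γ
    simp only [mem_filter, mem_univ, true_and, Fintype.mem_piFinset]
    constructor
    · intro h e
      by_cases he : e ∈ S
      · simp [he, Fin.ext_iff, h e he]
      · simp [he]
    · intro h e he
      have := h e
      rw [if_pos he, Finset.mem_singleton] at this
      simpa using this
  rw [h, Fintype.card_piFinset]
  have : ∀ e : DefPair N,
      ((if e ∈ S then ({0} : Finset (Fin M)) else univ).card)
        = if e ∈ S then 1 else M := by
    intro e; split <;> simp
  rw [Finset.prod_congr rfl fun e _ => this e, Finset.prod_ite, Finset.prod_const,
    Finset.prod_const, one_pow, one_mul]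
  congr 1
  rw [Finset.filter_not, Finset.filter_univ_mem, Finset.card_univ_diff]


lemma card_two (hM : M ≠ 0) (p q : DefPair N) (hpq : p ≠ q) :
    (univ.filter fun Γ : Labelling N M => (Γ p : ℕ) = 0 ∧ (Γ q : ℕ) = 0).card
      = M ^ (Fintype.card (DefPair N) - 2) := by
  have h := card_zero_on hM ({p, q} : Finset (DefPair N))
  rw [Finset.card_insert_of_notMem (by simpa using hpq), Finset.card_singleton] at h
  rw [← h]
  congr 1
  ext Γ
  simp [Finset.mem_insert, forall_eq_or_imp]

lemma sum_X (hM : M ≠ 0) :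
    ∑ Γ : Labelling N M, X M Γ
      = (Adm N).card * M ^ (Fintype.card (DefPair N) - 2) := by
  unfold X
  rw [Finset.sum_comm]
  rw [Finset.sum_congr rfl (fun a ha => ?_), Finset.sum_const, smul_eq_mul]
  have hne : a.1 ≠ a.2 := by
    simp only [Adm, mem_filter] at ha; exact ha.2.1
  rw [← card_two (N := N) hM a.1 a.2 hne, Finset.card_filter]

/-- neighbours of a defining pair -/
noncomputable def Nb (r : DefPair N) : Finset (DefPair N) :=
  univ.filter fun q => ∃ v : Fin N, v ∈ r.1 ∧ v ∈ q.1

lemma card_Nb (r : DefPair N) : (Nb r).card ≤ 2 * N := by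
  obtain ⟨⟨u, v⟩, huv⟩ := Quot.exists_rep r.1
  have : (Nb r).card = ((Nb r).image Subtype.val).card :=
    (Finset.card_image_of_injective _ Subtype.val_injective).symm
  rw [this]
  have hsub : (Nb r).image Subtype.val ⊆
      (univ.image fun w : Fin N => s(u, w)) ∪ (univ.image fun w : Fin N => s(v, w)) := by
    intro z hz
    simp only [Finset.mem_image] at hz
    obtain ⟨q, hq, rfl⟩ := hz
    simp only [Nb, mem_filter, mem_univ, true_and] at hq
    obtain ⟨x, hxr, hxq⟩ := hq
    obtain ⟨w, hw⟩ := (Sym2.mem_iff_exists).1 hxq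
    have hx : x = u ∨ x = v := by
      rw [← huv] at hxr; exact Sym2.mem_iff.1 hxr
    rcases hx with rfl | rfl
    · exact Finset.mem_union_left _ (by simp [hw])
    · exact Finset.mem_union_right _ (by simp [hw])
  calc ((Nb r).image Subtype.val).card ≤ _ := Finset.card_le_card hsub
    _ ≤ (univ.image fun w : Fin N => s(u, w)).card
        + (univ.image fun w : Fin N => s(v, w)).card := Finset.card_union_le _ _
    _ ≤ N + N := by
        gcongr <;> exact (Finset.card_image_le).trans (by simp)
    _ = 2 * N := by ring

def touch (ab : (DefPair N × DefPair N) × (DefPair N × DefPair N)) : Prop :=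
  ab.2.1 = ab.1.1 ∨ ab.2.1 = ab.1.2 ∨ ab.2.2 = ab.1.1 ∨ ab.2.2 = ab.1.2

def P2 (ab : (DefPair N × DefPair N) × (DefPair N × DefPair N)) : Prop :=
  ab.2 = ab.1 ∨ ab.2 = (ab.1.2, ab.1.1)

lemma card_filter_P2 : (((Adm N) ×ˢ (Adm N)).filter (fun ab => P2 ab)).card
    ≤ 2 * (Adm N).card := by
  have hsub : (((Adm N) ×ˢ (Adm N)).filter (fun ab => P2 ab)) ⊆
      (Adm N).biUnion (fun a => {(a, a), (a, (a.2, a.1))}) := by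
    intro ab hab
    simp only [mem_filter, Finset.mem_product] at hab
    obtain ⟨⟨ha, hb⟩, hP⟩ := hab
    refine Finset.mem_biUnion.2 ⟨ab.1, ha, ?_⟩
    rcases hP with h | h <;> simp [Prod.ext_iff] at h ⊢ <;> simp [← h.1, ← h.2]
  calc _ ≤ _ := Finset.card_le_card hsub
    _ ≤ ∑ a ∈ Adm N, ({(a, a), (a, (a.2, a.1))} : Finset _).card :=
        Finset.card_biUnion_le
    _ ≤ ∑ _a ∈ Adm N, 2 := Finset.sum_le_sum (fun a _ => Finset.card_insert_le _ _ |>.trans (by simp))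
    _ = 2 * (Adm N).card := by rw [Finset.sum_const, smul_eq_mul, mul_comm]

noncomputable def Bs (a : DefPair N × DefPair N) : Finset (DefPair N × DefPair N) :=
  ({a.1} ×ˢ Nb a.1) ∪ ({a.2} ×ˢ Nb a.2) ∪ (Nb a.1 ×ˢ {a.1}) ∪ (Nb a.2 ×ˢ {a.2})

lemma card_Bs (a : DefPair N × DefPair N) : (Bs a).card ≤ 8 * N := by
  have h1 : ({a.1} ×ˢ Nb a.1).card ≤ 2 * N := by
    rw [Finset.card_product]; simpa using card_Nb a.1
  have h2 : ({a.2} ×ˢ Nb a.2).card ≤ 2 * N := by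
    rw [Finset.card_product]; simpa using card_Nb a.2
  have h3 : (Nb a.1 ×ˢ ({a.1} : Finset (DefPair N))).card ≤ 2 * N := by
    rw [Finset.card_product]; simpa using card_Nb a.1
  have h4 : (Nb a.2 ×ˢ ({a.2} : Finset (DefPair N))).card ≤ 2 * N := by
    rw [Finset.card_product]; simpa using card_Nb a.2
  calc (Bs a).card ≤ _ := Finset.card_union_le _ _
    _ ≤ (({a.1} ×ˢ Nb a.1) ∪ ({a.2} ×ˢ Nb a.2)).card
        + (Nb a.1 ×ˢ ({a.1} : Finset (DefPair N))).card
        + (Nb a.2 ×ˢ ({a.2} : Finset (DefPair N))).card := by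
          gcongr; exact Finset.card_union_le _ _
    _ ≤ (({a.1} ×ˢ Nb a.1)).card + (({a.2} ×ˢ Nb a.2)).card
        + (Nb a.1 ×ˢ ({a.1} : Finset (DefPair N))).card
        + (Nb a.2 ×ˢ ({a.2} : Finset (DefPair N))).card := by
          gcongr; exact Finset.card_union_le _ _
    _ ≤ 2*N + 2*N + 2*N + 2*N := by gcongr
    _ = 8 * N := by ring

lemma card_filter_touch : (((Adm N) ×ˢ (Adm N)).filter (fun ab => touch ab)).card
    ≤ 8 * N * (Adm N).card := by
  classical
  have hsub : (((Adm N) ×ˢ (Adm N)).filter (fun ab => touch ab)) ⊆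
      (Adm N).biUnion (fun a => {a} ×ˢ Bs a) := by
    intro ab hab
    simp only [mem_filter, Finset.mem_product] at hab
    obtain ⟨⟨ha, hb⟩, hT⟩ := hab
    refine Finset.mem_biUnion.2 ⟨ab.1, ha, ?_⟩
    rw [Finset.mem_product, Finset.mem_singleton]
    refine ⟨rfl, ?_⟩
    have hbAdm : ab.2.1 ≠ ab.2.2 ∧ ∃ v : Fin N, v ∈ ab.2.1.1 ∧ v ∈ ab.2.2.1 := by
      simpa [Adm] using hb
    obtain ⟨-, v, hv1, hv2⟩ := hbAdm
    simp only [Bs, Finset.mem_union, Finset.mem_product, Finset.mem_singleton]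
    rcases hT with h | h | h | h
    · exact Or.inl <| Or.inl <| Or.inl ⟨h, by simp only [Nb, mem_filter, mem_univ, true_and]; exact ⟨v, h ▸ hv1, hv2⟩⟩
    · exact Or.inl <| Or.inl <| Or.inr ⟨h, by simp only [Nb, mem_filter, mem_univ, true_and]; exact ⟨v, h ▸ hv1, hv2⟩⟩
    · exact Or.inl <| Or.inr ⟨by simp only [Nb, mem_filter, mem_univ, true_and]; exact ⟨v, h ▸ hv2, hv1⟩, h⟩
    · exact Or.inr ⟨by simp only [Nb, mem_filter, mem_univ, true_and]; exact ⟨v, h ▸ hv2, hv1⟩, h⟩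
  calc _ ≤ _ := Finset.card_le_card hsub
    _ ≤ ∑ a ∈ Adm N, ({a} ×ˢ Bs a).card := Finset.card_biUnion_le
    _ ≤ ∑ _a ∈ Adm N, (8 * N) := by
        refine Finset.sum_le_sum fun a _ => ?_
        rw [Finset.card_product, Finset.card_singleton, one_mul]
        exact card_Bs a
    _ = 8 * N * (Adm N).card := by rw [Finset.sum_const, smul_eq_mul, mul_comm]


noncomputable def S4 (ab : (DefPair N × DefPair N) × (DefPair N × DefPair N)) :
    Finset (DefPair N) := {ab.1.1, ab.1.2, ab.2.1, ab.2.2}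

lemma sum_X_sq_eq (hM : M ≠ 0) :
    ∑ Γ : Labelling N M, (X M Γ) ^ 2
      = ∑ ab ∈ (Adm N) ×ˢ (Adm N),
          M ^ (Fintype.card (DefPair N) - (S4 ab).card) := by
  have hX : ∀ Γ : Labelling N M, (X M Γ) ^ 2
      = ∑ ab ∈ (Adm N) ×ˢ (Adm N),
          (if (∀ e ∈ S4 ab, (Γ e : ℕ) = 0) then 1 else 0) := by
    intro Γ
    rw [sq, X, Finset.sum_mul_sum, ← Finset.sum_product']
    refine Finset.sum_congr rfl fun ab _ => ?_
    have : ((if (Γ ab.1.1 : ℕ) = 0 ∧ (Γ ab.1.2 : ℕ) = 0 then 1 else 0) *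
        (if (Γ ab.2.1 : ℕ) = 0 ∧ (Γ ab.2.2 : ℕ) = 0 then 1 else 0) : ℕ)
        = if ((Γ ab.1.1 : ℕ) = 0 ∧ (Γ ab.1.2 : ℕ) = 0)
            ∧ ((Γ ab.2.1 : ℕ) = 0 ∧ (Γ ab.2.2 : ℕ) = 0) then 1 else 0 := by
      split_ifs with h1 h2 h3 <;> simp_all
    rw [this]
    congr 1
    simp only [S4, Finset.mem_insert, Finset.mem_singleton, eq_iff_iff]
    constructor
    · rintro ⟨⟨h1, h2⟩, h3, h4⟩ e he
      rcases he with rfl | rfl | rfl | rfl <;> assumption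
    · intro h
      exact ⟨⟨h _ (by tauto), h _ (by tauto)⟩, h _ (by tauto), h _ (by tauto)⟩
  calc ∑ Γ : Labelling N M, (X M Γ) ^ 2
      = ∑ Γ : Labelling N M, ∑ ab ∈ (Adm N) ×ˢ (Adm N),
          (if (∀ e ∈ S4 ab, (Γ e : ℕ) = 0) then 1 else 0) :=
        Finset.sum_congr rfl fun Γ _ => hX Γ
    _ = ∑ ab ∈ (Adm N) ×ˢ (Adm N), ∑ Γ : Labelling N M,
          (if (∀ e ∈ S4 ab, (Γ e : ℕ) = 0) then 1 else 0) := Finset.sum_comm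
    _ = _ := by
        refine Finset.sum_congr rfl fun ab _ => ?_
        rw [← Finset.card_filter, card_zero_on hM]

lemma sum_X_sq_le (hM : M ≠ 0) (hEk : 4 ≤ Fintype.card (DefPair N)) :
    (∑ Γ : Labelling N M, (X M Γ) ^ 2) * M ^ 4
      ≤ ((Adm N).card ^ 2 + 8 * N * (Adm N).card * M + 2 * (Adm N).card * M ^ 2)
          * M ^ (Fintype.card (DefPair N)) := by
  have hM1 : 1 ≤ M := Nat.one_le_iff_ne_zero.2 hM
  set E := Fintype.card (DefPair N) with hE
  -- pointwise bounds
  have hk_le : ∀ ab : (DefPair N × DefPair N) × (DefPair N × DefPair N),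
      (S4 ab).card ≤ E := fun ab => by
    simpa [hE] using Finset.card_le_univ (S4 ab)
  have hterm : ∀ ab : (DefPair N × DefPair N) × (DefPair N × DefPair N),
      ∀ j, j ≤ 4 → j ≤ (S4 ab).card →
      M ^ (E - (S4 ab).card) * M ^ 4 ≤ M ^ (4 - j) * M ^ E := by
    intro ab j hj4 hjk
    rw [← pow_add, ← pow_add]
    exact Nat.pow_le_pow_right hM1 (by have := hk_le ab; omega)
  -- split the sum
  rw [sum_X_sq_eq hM, Finset.sum_mul]
  rw [← Finset.sum_filter_add_sum_filter_not ((Adm N) ×ˢ (Adm N)) (fun ab => touch ab)]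
  rw [← Finset.sum_filter_add_sum_filter_not
        (((Adm N) ×ˢ (Adm N)).filter (fun ab => touch ab)) (fun ab => P2 ab)]
  -- the three parts
  have hmemAdm : ∀ ab : (DefPair N × DefPair N) × (DefPair N × DefPair N),
      ab ∈ (Adm N) ×ˢ (Adm N) → ab.1.1 ≠ ab.1.2 ∧ ab.2.1 ≠ ab.2.2 := by
    intro ab hab
    rw [Finset.mem_product] at hab
    have h1 := hab.1; have h2 := hab.2
    simp only [Adm, mem_filter, mem_univ, true_and] at h1 h2
    exact ⟨h1.1, h2.1⟩
  have card2 : ∀ ab ∈ (Adm N) ×ˢ (Adm N), 2 ≤ (S4 ab).card := by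
    intro ab hab
    have hne := (hmemAdm ab hab).1
    have hsub : ({ab.1.1, ab.1.2} : Finset (DefPair N)) ⊆ S4 ab := by
      simp [S4, Finset.insert_subset_iff]
    have hc : ({ab.1.1, ab.1.2} : Finset (DefPair N)).card = 2 := by
      rw [Finset.card_insert_of_notMem (by simpa using hne)]; simp
    calc 2 = _ := hc.symm
      _ ≤ _ := Finset.card_le_card hsub
  have part1 : ∑ ab ∈ ((((Adm N) ×ˢ (Adm N)).filter (fun ab => touch ab)).filter
        (fun ab => P2 ab)), M ^ (E - (S4 ab).card) * M ^ 4
      ≤ (2 * (Adm N).card) * (M ^ 2 * M ^ E) := by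
    have hpt : ∀ ab ∈ ((((Adm N) ×ˢ (Adm N)).filter (fun ab => touch ab)).filter
        (fun ab => P2 ab)), M ^ (E - (S4 ab).card) * M ^ 4 ≤ M ^ 2 * M ^ E := by
      intro ab hab
      simp only [mem_filter] at hab
      simpa using hterm ab 2 (by norm_num) (card2 ab hab.1.1)
    calc _ ≤ _ := Finset.sum_le_card_nsmul _ _ _ hpt
      _ ≤ (2 * (Adm N).card) * (M ^ 2 * M ^ E) := by
          rw [smul_eq_mul]
          have hc : ((((Adm N) ×ˢ (Adm N)).filter (fun ab => touch ab)).filter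
              (fun ab => P2 ab)).card ≤ 2 * (Adm N).card := by
            refine le_trans (Finset.card_le_card ?_) card_filter_P2
            exact Finset.filter_subset_filter _ (Finset.filter_subset _ _)
          exact Nat.mul_le_mul_right _ hc
  have part2 : ∑ ab ∈ ((((Adm N) ×ˢ (Adm N)).filter (fun ab => touch ab)).filter
        (fun ab => ¬ P2 ab)), M ^ (E - (S4 ab).card) * M ^ 4
      ≤ (8 * N * (Adm N).card) * (M * M ^ E) := by
    have hpt : ∀ ab ∈ ((((Adm N) ×ˢ (Adm N)).filter (fun ab => touch ab)).filter
        (fun ab => ¬ P2 ab)), M ^ (E - (S4 ab).card) * M ^ 4 ≤ M * M ^ E := by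
      intro ab hab
      simp only [mem_filter] at hab
      obtain ⟨⟨habm, htch⟩, hnp2⟩ := hab
      have hane := (hmemAdm ab habm).1
      have hbne := (hmemAdm ab habm).2
      have h3 : 3 ≤ (S4 ab).card := by
        have hex : ∃ e, (e = ab.2.1 ∨ e = ab.2.2)
            ∧ e ∉ ({ab.1.1, ab.1.2} : Finset (DefPair N)) := by
          by_contra hcon
          push_neg at hcon
          have hb1 := hcon ab.2.1 (Or.inl rfl)
          have hb2 := hcon ab.2.2 (Or.inr rfl)
          simp only [Finset.mem_insert, Finset.mem_singleton] at hb1 hb2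
          rcases hb1 with h1 | h1 <;> rcases hb2 with h2 | h2
          · exact hbne (h1.trans h2.symm)
          · exact hnp2 (Or.inl (Prod.ext h1 h2))
          · exact hnp2 (Or.inr (Prod.ext h1 h2))
          · exact hbne (h1.trans h2.symm)
        obtain ⟨e, he, hne⟩ := hex
        have hsub : insert e ({ab.1.1, ab.1.2} : Finset (DefPair N)) ⊆ S4 ab := by
          simp only [Finset.insert_subset_iff, S4]
          refine ⟨?_, by simp, by simp⟩
          rcases he with rfl | rfl <;> simp
        have hc : (insert e ({ab.1.1, ab.1.2} : Finset (DefPair N))).card = 3 := by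
          rw [Finset.card_insert_of_notMem hne,
            Finset.card_insert_of_notMem (by simpa using hane)]
          simp
        calc 3 = _ := hc.symm
          _ ≤ _ := Finset.card_le_card hsub
      simpa using hterm ab 3 (by norm_num) h3
    calc _ ≤ _ := Finset.sum_le_card_nsmul _ _ _ hpt
      _ ≤ (8 * N * (Adm N).card) * (M * M ^ E) := by
          rw [smul_eq_mul]
          have hc : ((((Adm N) ×ˢ (Adm N)).filter (fun ab => touch ab)).filter
              (fun ab => ¬ P2 ab)).card ≤ 8 * N * (Adm N).card :=
            le_trans (Finset.card_le_card (Finset.filter_subset _ _)) card_filter_touch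
          exact Nat.mul_le_mul_right _ hc
  have part3 : ∑ ab ∈ (((Adm N) ×ˢ (Adm N)).filter (fun ab => ¬ touch ab)),
        M ^ (E - (S4 ab).card) * M ^ 4
      ≤ ((Adm N).card ^ 2) * M ^ E := by
    have hpt : ∀ ab ∈ (((Adm N) ×ˢ (Adm N)).filter (fun ab => ¬ touch ab)),
        M ^ (E - (S4 ab).card) * M ^ 4 ≤ M ^ E := by
      intro ab hab
      simp only [mem_filter] at hab
      obtain ⟨habm, hnt⟩ := hab
      have hane := (hmemAdm ab habm).1
      have hbne := (hmemAdm ab habm).2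
      simp only [touch, not_or] at hnt
      obtain ⟨h1, h2, h3, h4⟩ := hnt
      have h4c : 4 ≤ (S4 ab).card := by
        have hA : ab.1.1 ∉ ({ab.1.2, ab.2.1, ab.2.2} : Finset (DefPair N)) := by
          simp only [Finset.mem_insert, Finset.mem_singleton]
          push_neg
          exact ⟨hane, fun h => h1 h.symm, fun h => h3 h.symm⟩
        have hB : ab.1.2 ∉ ({ab.2.1, ab.2.2} : Finset (DefPair N)) := by
          simp only [Finset.mem_insert, Finset.mem_singleton]
          push_neg
          exact ⟨fun h => h2 h.symm, fun h => h4 h.symm⟩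
        have hC : ab.2.1 ∉ ({ab.2.2} : Finset (DefPair N)) := by simpa using hbne
        have hcard : (S4 ab).card = 4 := by
          show ({ab.1.1, ab.1.2, ab.2.1, ab.2.2} : Finset (DefPair N)).card = 4
          rw [Finset.card_insert_of_notMem hA, Finset.card_insert_of_notMem hB,
            Finset.card_insert_of_notMem hC, Finset.card_singleton]
        omega
      simpa using hterm ab 4 (by norm_num) h4c
    calc _ ≤ _ := Finset.sum_le_card_nsmul _ _ _ hpt
      _ ≤ ((Adm N).card ^ 2) * M ^ E := by
          rw [smul_eq_mul]
          have hc : (((Adm N) ×ˢ (Adm N)).filter (fun ab => ¬ touch ab)).card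
              ≤ (Adm N).card ^ 2 := by
            refine le_trans (Finset.card_le_card (Finset.filter_subset _ _)) ?_
            rw [Finset.card_product, sq]
          exact Nat.mul_le_mul_right _ hc
  calc _ ≤ (2 * (Adm N).card) * (M ^ 2 * M ^ E) + (8 * N * (Adm N).card) * (M * M ^ E)
        + ((Adm N).card ^ 2) * M ^ E := by
        exact add_le_add (add_le_add part1 part2) part3
    _ = _ := by ring

lemma card_Adm_lower (N : ℕ) : N * (N - 1) * (N - 2) ≤ (Adm N).card := by
  classical
  have hinj : Function.Injective (fun f : Fin 3 ↪ Fin N =>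
      ((⟨s(f 0, f 1), by simp [Sym2.mk_isDiag_iff]⟩,
        ⟨s(f 0, f 2), by simp [Sym2.mk_isDiag_iff]⟩) :
        DefPair N × DefPair N)) := by
    intro f g h
    simp only [Prod.ext_iff, Subtype.ext_iff, Sym2.eq_iff] at h
    obtain ⟨h1, h2⟩ := h
    have hg01 : g 0 ≠ g 1 := fun h => by simpa using g.injective h
    have hg02 : g 0 ≠ g 2 := fun h => by simpa using g.injective h
    have hg12 : g 1 ≠ g 2 := fun h => by simpa using g.injective h
    have hf0 : f 0 = g 0 ∧ f 1 = g 1 := by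
      rcases h1 with ⟨ha, hb⟩ | ⟨ha, hb⟩
      · exact ⟨ha, hb⟩
      · rcases h2 with ⟨hc, hd⟩ | ⟨hc, hd⟩
        · exact absurd (ha.symm.trans hc) hg01.symm
        · exact absurd (ha.symm.trans hc) hg12
    have hf2 : f 2 = g 2 := by
      rcases h2 with ⟨hc, hd⟩ | ⟨hc, hd⟩
      · exact hd
      · exact absurd (hf0.1.symm.trans hc) hg02
    ext i
    fin_cases i
    · exact congrArg Fin.val hf0.1
    · exact congrArg Fin.val hf0.2
    · exact congrArg Fin.val hf2
  have hmaps : ∀ f : Fin 3 ↪ Fin N, ((⟨s(f 0, f 1), by simp [Sym2.mk_isDiag_iff]⟩,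
        ⟨s(f 0, f 2), by simp [Sym2.mk_isDiag_iff]⟩) :
        DefPair N × DefPair N) ∈ Adm N := by
    intro f
    simp only [Adm, mem_filter, mem_univ, true_and]
    constructor
    · intro h
      have hval : s(f 0, f 1) = s(f 0, f 2) := congrArg (fun x => x.val) h
      rcases Sym2.eq_iff.1 hval with ⟨-, hb⟩ | ⟨ha, hb⟩
      · exact absurd (f.injective hb) (by decide)
      · exact absurd (f.injective ha) (by decide)
    · exact ⟨f 0, by simp, by simp⟩
  have := Finset.card_le_card_of_injOn (s := (univ : Finset (Fin 3 ↪ Fin N))) _ (fun f _ => hmaps f) (fun f _ g _ h => hinj h)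
  rw [Finset.card_univ, Fintype.card_embedding_eq] at this
  have heq : Nat.descFactorial N 3 = N * (N - 1) * (N - 2) := by
    simp [Nat.descFactorial]
    ring
  simp only [Fintype.card_fin] at this
  rw [heq] at this
  exact this

lemma card_defPair (N : ℕ) : Fintype.card (DefPair N) = N.choose 2 := by
  rw [Sym2.card_subtype_not_diag, Fintype.card_fin]

lemma free_X_eq_zero {Γ : Labelling N M} (h : TwoTwoFree Γ) : X M Γ = 0 := by
  rw [X]
  refine Finset.sum_eq_zero fun a ha => ?_
  simp only [Adm, mem_filter, mem_univ, true_and] at ha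
  obtain ⟨hne, v, hv1, hv2⟩ := ha
  rw [if_neg]
  rintro ⟨hz1, hz2⟩
  exact h a.1 a.2 hz1 hz2 hne v hv1 hv2

set_option maxHeartbeats 1000000 in
theorem main_bound (N M : ℕ) (hM : M ≠ 0) (hN : 3 ≤ N)
    (hE4 : 4 ≤ Fintype.card (DefPair N)) :
    ((univ.filter fun Γ : Labelling N M => TwoTwoFree Γ).card : ℝ)
        / (Fintype.card (Labelling N M) : ℝ)
      ≤ 1 - ((N * (N - 1) * (N - 2) : ℕ) : ℝ)
          / (((N * (N - 1) * (N - 2) : ℕ) : ℝ) + 8 * N * M + 2 * (M : ℝ) ^ 2) := by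
  classical
  set E := Fintype.card (DefPair N) with hE
  set A := (Adm N).card with hA
  set L := N * (N - 1) * (N - 2) with hLdef
  have hL6 : 6 ≤ L := by
    have : 3 * 2 * 1 ≤ N * (N - 1) * (N - 2) := by
      apply Nat.mul_le_mul (Nat.mul_le_mul hN (by omega)) (by omega)
    omega
  have hLA : L ≤ A := card_Adm_lower N
  have hcardLab : Fintype.card (Labelling N M) = M ^ E := by
    rw [Fintype.card_fun, Fintype.card_fin]
  -- real quantities
  set cR : ℝ := (M : ℝ) ^ E with hcR
  have hMpos : (0 : ℝ) < M := by
    exact_mod_cast Nat.pos_of_ne_zero hM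
  have hcpos : (0 : ℝ) < cR := by positivity
  set F := (univ.filter fun Γ : Labelling N M => X M Γ ≠ 0).card with hF
  set xR : ℝ := ∑ Γ : Labelling N M, (X M Γ : ℝ) with hxR
  set sR : ℝ := ∑ Γ : Labelling N M, (X M Γ : ℝ) ^ 2 with hsR
  -- first moment
  have hpow : (M:ℝ) ^ (E - 2) * (M:ℝ) ^ 2 = cR := by
    rw [hcR, ← pow_add]
    congr 1
    omega
  have h1 : xR * (M:ℝ) ^ 2 = (A : ℝ) * cR := by
    rw [hxR, ← Nat.cast_sum, sum_X hM]
    push_cast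
    rw [mul_assoc, hpow]
  -- second moment
  have h2 : sR * (M:ℝ) ^ 4
      ≤ ((A:ℝ) ^ 2 + 8 * N * A * M + 2 * A * (M:ℝ) ^ 2) * cR := by
    have := sum_X_sq_le (N := N) hM hE4
    have hcast : ((∑ Γ : Labelling N M, (X M Γ) ^ 2) * M ^ 4 : ℝ)
        ≤ (((Adm N).card ^ 2 + 8 * N * (Adm N).card * M + 2 * (Adm N).card * M ^ 2)
            * M ^ E : ℝ) := by
      exact_mod_cast this
    push_cast at hcast
    rw [hsR]
    push_cast
    convert hcast using 2 <;> ring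
  -- Cauchy-Schwarz
  have h3 : xR ^ 2 ≤ (F : ℝ) * sR := by
    have hxeq : xR = ∑ Γ ∈ univ.filter (fun Γ : Labelling N M => X M Γ ≠ 0),
        (X M Γ : ℝ) := by
      rw [hxR, Finset.sum_filter_of_ne]
      intro Γ _ h
      simpa using h
    have hCS := sq_sum_le_card_mul_sum_sq
      (s := univ.filter (fun Γ : Labelling N M => X M Γ ≠ 0))
      (f := fun Γ => (X M Γ : ℝ))
    have hsle : ∑ Γ ∈ univ.filter (fun Γ : Labelling N M => X M Γ ≠ 0),
        (X M Γ : ℝ) ^ 2 ≤ sR := by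
      rw [hsR]
      exact Finset.sum_le_sum_of_subset_of_nonneg (Finset.filter_subset _ _)
        (fun Γ _ _ => by positivity)
    calc xR ^ 2 = _ := by rw [hxeq]
      _ ≤ _ := hCS
      _ ≤ (F : ℝ) * sR := by
          refine mul_le_mul_of_nonneg_left hsle (by positivity)
  -- positivity of xR, sR
  have hApos : (0:ℝ) < A := by
    have : 0 < A := lt_of_lt_of_le (by omega) hLA
    exact_mod_cast this
  have hxpos : 0 < xR := by
    have : xR * (M:ℝ)^2 > 0 := by rw [h1]; positivity
    nlinarith [sq_nonneg ((M:ℝ))]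
  have hspos : 0 < sR := by
    have hxs : xR ≤ sR := by
      rw [hxR, hsR]
      refine Finset.sum_le_sum fun Γ _ => ?_
      have : X M Γ ≤ (X M Γ)^2 := Nat.le_self_pow two_ne_zero _
      exact_mod_cast this
    linarith
  -- free count vs F
  have hsplit : (univ.filter fun Γ : Labelling N M => X M Γ = 0).card + F
      = Fintype.card (Labelling N M) := by
    rw [hF]
    rw [Finset.card_filter_add_card_filter_not]
    exact Finset.card_univ
  have hTTFsub : (univ.filter fun Γ : Labelling N M => TwoTwoFree Γ).card
      ≤ (univ.filter fun Γ : Labelling N M => X M Γ = 0).card := by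
    apply Finset.card_le_card
    intro Γ hΓ
    simp only [mem_filter, mem_univ, true_and] at hΓ ⊢
    exact free_X_eq_zero hΓ
  have hTTF : ((univ.filter fun Γ : Labelling N M => TwoTwoFree Γ).card : ℝ)
      ≤ cR - F := by
    have : (univ.filter fun Γ : Labelling N M => TwoTwoFree Γ).card + F
        ≤ M ^ E := by
      rw [← hcardLab]
      omega
    have := (Nat.cast_le (α := ℝ)).2 this
    push_cast at this
    rw [hcR]
    push_cast
    linarith
  -- key inequality : L * cR ≤ F * D'
  set t : ℝ := 8 * N * M + 2 * (M:ℝ)^2 with ht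
  have htpos : 0 < t := by rw [ht]; positivity
  set D' : ℝ := (L:ℝ) + t with hD'
  have hD'pos : 0 < D' := by
    have : (0:ℝ) < L := by exact_mod_cast lt_of_lt_of_le (by norm_num) hL6
    rw [hD']; linarith
  have hkey : (L:ℝ) * cR * sR ≤ xR ^ 2 * D' := by
    have e1 : xR^2 * (M:ℝ)^4 = (A:ℝ)^2 * cR^2 := by
      have h1' := congrArg (fun z : ℝ => z ^ 2) h1
      simp only [mul_pow] at h1'
      calc xR^2 * (M:ℝ)^4 = xR^2 * ((M:ℝ)^2)^2 := by ring
        _ = (A:ℝ)^2 * cR^2 := h1'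
    have hLcast : (L:ℝ) ≤ (A:ℝ) := by exact_mod_cast hLA
    have e2 : (L:ℝ) * cR * sR * (M:ℝ)^4
        ≤ (L:ℝ) * cR * (((A:ℝ)^2 + 8*N*A*M + 2*A*(M:ℝ)^2) * cR) := by
      have hnn : (0:ℝ) ≤ (L:ℝ) * cR := by positivity
      nlinarith [mul_le_mul_of_nonneg_left h2 hnn]
    have e3 : (L:ℝ) * cR * (((A:ℝ)^2 + 8*N*A*M + 2*A*(M:ℝ)^2) * cR)
        ≤ (A:ℝ)^2 * cR^2 * D' := by
      have hBD : ((A:ℝ)^2 + 8*N*A*M + 2*A*(M:ℝ)^2) = (A:ℝ) * ((A:ℝ) + t) := by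
        rw [ht]; ring
      rw [hBD, hD']
      have base : (L:ℝ) * ((A:ℝ) + t) ≤ (A:ℝ) * ((L:ℝ) + t) := by nlinarith
      nlinarith [mul_le_mul_of_nonneg_left base (by positivity : (0:ℝ) ≤ (A:ℝ) * cR^2)]
    have e4 : (L:ℝ) * cR * sR * (M:ℝ)^4 ≤ xR^2 * D' * (M:ℝ)^4 := by
      calc (L:ℝ) * cR * sR * (M:ℝ)^4 ≤ _ := e2
        _ ≤ (A:ℝ)^2 * cR^2 * D' := e3
        _ = xR^2 * (M:ℝ)^4 * D' := by rw [e1]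
        _ = xR^2 * D' * (M:ℝ)^4 := by ring
    have hM4 : (0:ℝ) < (M:ℝ)^4 := by positivity
    exact le_of_mul_le_mul_right e4 hM4
  have hLF : (L:ℝ) * cR ≤ (F:ℝ) * D' := by
    have : xR^2 * D' ≤ (F:ℝ) * sR * D' :=
      mul_le_mul_of_nonneg_right h3 (le_of_lt hD'pos)
    have h' : (L:ℝ) * cR * sR ≤ (F:ℝ) * D' * sR := by nlinarith
    exact le_of_mul_le_mul_right h' hspos
  -- conclude
  rw [hcardLab]
  have hcRcast : ((M ^ E : ℕ) : ℝ) = cR := by rw [hcR]; push_cast; ring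
  rw [hcRcast]
  rw [div_le_iff₀ hcpos]
  have hgoal : (1 - (L:ℝ)/D') * cR = (cR * D' - (L:ℝ) * cR) / D' := by
    field_simp
  show ((univ.filter fun Γ : Labelling N M => TwoTwoFree Γ).card : ℝ)
      ≤ (1 - (L:ℝ) / ((L:ℝ) + 8 * N * M + 2 * (M:ℝ)^2)) * cR
  have hDeq : (L:ℝ) + 8 * N * M + 2 * (M:ℝ)^2 = D' := by rw [hD', ht]; ring
  rw [hDeq, hgoal]
  rw [le_div_iff₀ hD'pos]
  calc ((univ.filter fun Γ : Labelling N M => TwoTwoFree Γ).card : ℝ) * D'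
      ≤ (cR - F) * D' := mul_le_mul_of_nonneg_right hTTF (le_of_lt hD'pos)
    _ = cR * D' - (F:ℝ) * D' := by ring
    _ ≤ cR * D' - (L:ℝ) * cR := by linarith

noncomputable def mR (N : ℕ) : ℝ := (Nat.sqrt (N ^ 3) : ℝ)
noncomputable def lR (N : ℕ) : ℝ := ((N * (N - 1) * (N - 2) : ℕ) : ℝ)
noncomputable def bnd (N : ℕ) : ℝ :=
  1 - lR N / (lR N + 8 * N * mR N + 2 * (mR N) ^ 2)

lemma mR_nonneg (N : ℕ) : 0 ≤ mR N := by unfold mR; positivity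

lemma mR_sq_le (N : ℕ) : (mR N) ^ 2 ≤ (N : ℝ) ^ 3 := by
  have h := Nat.sqrt_le' (N ^ 3)
  rw [mR]
  exact_mod_cast h

lemma mR_le_sqrt (N : ℕ) : mR N ≤ Real.sqrt ((N : ℝ) ^ 3) :=
  (Real.le_sqrt (mR_nonneg N) (by positivity)).2 (mR_sq_le N)

lemma mR_sq_ge (N : ℕ) : (N : ℝ) ^ 3 - 2 * mR N - 1 ≤ (mR N) ^ 2 := by
  have h := Nat.lt_succ_sqrt' (N ^ 3)
  have h' : (N ^ 3 : ℕ) < (Nat.sqrt (N ^ 3)) ^ 2 + 2 * Nat.sqrt (N ^ 3) + 1 := by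
    calc (N ^ 3 : ℕ) < (Nat.sqrt (N ^ 3) + 1) ^ 2 := h
      _ = (Nat.sqrt (N ^ 3)) ^ 2 + 2 * Nat.sqrt (N ^ 3) + 1 := by ring
  have hr : ((N : ℝ)) ^ 3 < (mR N) ^ 2 + 2 * mR N + 1 := by
    rw [mR]; exact_mod_cast h'
  linarith

lemma sqrt_cube_eq (N : ℕ) : Real.sqrt ((N : ℝ) ^ 3) = N * Real.sqrt N := by
  have h3 : ((N : ℝ)) ^ 3 = (N : ℝ) ^ 2 * N := by ring
  rw [h3, Real.sqrt_mul (by positivity), Real.sqrt_sq (by positivity)]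

lemma tendsto_bnd : Tendsto bnd atTop (nhds (2 / 3)) := by
  have h1N : Tendsto (fun N : ℕ => 1 / (N : ℝ)) atTop (nhds 0) :=
    tendsto_one_div_atTop_nhds_zero_nat
  have hsqrt1N : Tendsto (fun N : ℕ => Real.sqrt (1 / (N : ℝ))) atTop (nhds 0) := by
    have h := (Real.continuous_sqrt.tendsto 0).comp h1N
    simpa [Function.comp_def] using h
  -- L1
  have hL1 : Tendsto (fun N : ℕ => lR N / (N : ℝ) ^ 3) atTop (nhds 1) := by
    have hlim : Tendsto (fun N : ℕ => (1 - 1 / (N : ℝ)) * (1 - 2 / (N : ℝ))) atTop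
        (nhds 1) := by
      have h2N : Tendsto (fun N : ℕ => 2 / (N : ℝ)) atTop (nhds 0) := by
        have := h1N.const_mul 2
        simpa [div_eq_mul_inv] using this
      have ha : Tendsto (fun N : ℕ => (1 : ℝ) - 1 / (N : ℝ)) atTop (nhds (1 - 0)) :=
        tendsto_const_nhds.sub h1N
      have hb : Tendsto (fun N : ℕ => (1 : ℝ) - 2 / (N : ℝ)) atTop (nhds (1 - 0)) :=
        tendsto_const_nhds.sub h2N
      have := ha.mul hb
      simpa using this
    refine hlim.congr' ?_
    filter_upwards [eventually_ge_atTop 2] with N hN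
    have h1 : (1 : ℝ) ≤ (N : ℝ) := by exact_mod_cast (by omega : 1 ≤ N)
    have hNne : (N : ℝ) ≠ 0 := by positivity
    rw [lR]
    have hcast : ((N * (N - 1) * (N - 2) : ℕ) : ℝ)
        = (N : ℝ) * ((N : ℝ) - 1) * ((N : ℝ) - 2) := by
      push_cast [Nat.cast_sub (by omega : 1 ≤ N), Nat.cast_sub (by omega : 2 ≤ N)]
      ring
    rw [hcast]
    field_simp
  -- L3
  have hL3 : Tendsto (fun N : ℕ => (N : ℝ) * mR N / (N : ℝ) ^ 3) atTop (nhds 0) := by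
    refine tendsto_of_tendsto_of_tendsto_of_le_of_le' tendsto_const_nhds hsqrt1N ?_ ?_
    · filter_upwards [eventually_ge_atTop 1] with N hN
      have h0 := mR_nonneg N
      positivity
    · filter_upwards [eventually_ge_atTop 1] with N hN
      have hNpos : (0 : ℝ) < N := by exact_mod_cast hN
      have hm : mR N ≤ (N : ℝ) * Real.sqrt N := by
        rw [← sqrt_cube_eq]; exact mR_le_sqrt N
      have hkey : (N : ℝ) * mR N / (N : ℝ) ^ 3 ≤ Real.sqrt N / N := by
        rw [div_le_div_iff₀ (by positivity) hNpos]
        have hs : (N:ℝ) * mR N * (N:ℝ) ≤ (N:ℝ) * ((N:ℝ) * Real.sqrt N) * (N:ℝ) := by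
          have := mul_le_mul_of_nonneg_left hm (le_of_lt hNpos)
          nlinarith
        nlinarith [hs]
      calc (N : ℝ) * mR N / (N : ℝ) ^ 3 ≤ Real.sqrt N / N := hkey
        _ = Real.sqrt (1 / N) := by
            rw [Real.sqrt_div_self', one_div, ← Real.sqrt_inv, one_div]
  -- L2
  have hL2 : Tendsto (fun N : ℕ => (mR N) ^ 2 / (N : ℝ) ^ 3) atTop (nhds 1) := by
    have hlow : Tendsto (fun N : ℕ => 1 - 3 / (N : ℝ)) atTop (nhds 1) := by
      have h3N : Tendsto (fun N : ℕ => 3 / (N : ℝ)) atTop (nhds 0) := by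
        have := h1N.const_mul 3
        simpa [div_eq_mul_inv] using this
      have h' : Tendsto (fun N : ℕ => (1 : ℝ) - 3 / (N : ℝ)) atTop (nhds (1 - 0)) :=
        tendsto_const_nhds.sub h3N
      simpa using h'
    refine tendsto_of_tendsto_of_tendsto_of_le_of_le' hlow tendsto_const_nhds ?_ ?_
    · filter_upwards [eventually_ge_atTop 1] with N hN
      have hNpos : (0 : ℝ) < N := by exact_mod_cast hN
      have hN1 : (1 : ℝ) ≤ N := by exact_mod_cast hN
      have hsm : Real.sqrt ((N : ℝ) ^ 3) ≤ (N : ℝ) ^ 2 := by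
        rw [sqrt_cube_eq]
        have : Real.sqrt N ≤ N := by
          calc Real.sqrt N ≤ Real.sqrt ((N:ℝ)^2) :=
            Real.sqrt_le_sqrt (by nlinarith)
          _ = N := Real.sqrt_sq (le_of_lt hNpos)
        nlinarith
      have hmle : mR N ≤ (N : ℝ) ^ 2 := le_trans (mR_le_sqrt N) hsm
      have hnum : (N : ℝ) ^ 3 - 3 * (N : ℝ) ^ 2 ≤ (mR N) ^ 2 := by
        have := mR_sq_ge N
        nlinarith
      have : 1 - 3 / (N : ℝ) = ((N : ℝ) ^ 3 - 3 * (N : ℝ) ^ 2) / (N : ℝ) ^ 3 := by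
        field_simp
      rw [this]
      exact div_le_div_of_nonneg_right hnum (by positivity) |>.trans_eq rfl
    · filter_upwards [eventually_ge_atTop 1] with N hN
      have hNpos : (0 : ℝ) < N := by exact_mod_cast hN
      rw [div_le_one (by positivity)]
      exact mR_sq_le N
  -- denominator
  have hD : Tendsto (fun N : ℕ =>
      (lR N + 8 * N * mR N + 2 * (mR N) ^ 2) / (N : ℝ) ^ 3) atTop (nhds 3) := by
    have heq : (fun N : ℕ => (lR N + 8 * N * mR N + 2 * (mR N) ^ 2) / (N : ℝ) ^ 3)
        = fun N : ℕ => lR N / (N : ℝ) ^ 3 + 8 * ((N : ℝ) * mR N / (N : ℝ) ^ 3)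
            + 2 * ((mR N) ^ 2 / (N : ℝ) ^ 3) := by
      funext N
      rw [add_div, add_div]
      ring
    rw [heq]
    have := (hL1.add ((hL3.const_mul 8))).add (hL2.const_mul 2)
    norm_num at this ⊢
    exact this
  -- ratio
  have hq : Tendsto (fun N : ℕ =>
      lR N / (lR N + 8 * N * mR N + 2 * (mR N) ^ 2)) atTop (nhds (1 / 3)) := by
    have := hL1.div hD (by norm_num)
    refine this.congr' ?_
    filter_upwards [eventually_ge_atTop 3] with N hN
    have hNpos : (0 : ℝ) < N := by exact_mod_cast (by omega : 0 < N)
    have hc : ((N : ℝ) ^ 3) ≠ 0 := by positivity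
    set a := lR N
    set b := lR N + 8 * N * mR N + 2 * (mR N) ^ 2
    rcases eq_or_ne b 0 with hb | hb
    · show (lR N / (N:ℝ)^3) / (b / (N:ℝ)^3) = lR N / b
      rw [hb]
      simp
    · show (lR N / (N:ℝ)^3) / (b / (N:ℝ)^3) = lR N / b
      field_simp
  -- conclude
  have h23 : (2 : ℝ) / 3 = 1 - 1 / 3 := by norm_num
  rw [h23]
  have hfin : Tendsto (fun N : ℕ => (1 : ℝ)
      - lR N / (lR N + 8 * N * mR N + 2 * (mR N) ^ 2)) atTop (nhds (1 - 1 / 3)) :=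
    tendsto_const_nhds.sub hq
  exact hfin

end TTF

/-- At the threshold `f(N) = N^{3/2}` (rounded to an integer, i.e. `f(N) = ⌊√(N³)⌋`),
the limsup of the probability that a random labelling is (2,2)-free is at most `2/3`. -/
theorem limsup_prob_two_two_free_le :
    Filter.limsup (fun N : ℕ =>
        ((Finset.univ.filter fun Γ : Labelling N (Nat.sqrt (N ^ 3)) =>
            TwoTwoFree Γ).card : ℝ) /
          (Fintype.card (Labelling N (Nat.sqrt (N ^ 3))) : ℝ)) atTop ≤ 2 / 3 := by
  set P : ℕ → ℝ := fun N =>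
    ((Finset.univ.filter fun Γ : Labelling N (Nat.sqrt (N ^ 3)) =>
        TwoTwoFree Γ).card : ℝ) /
      (Fintype.card (Labelling N (Nat.sqrt (N ^ 3))) : ℝ) with hP
  have hev : P ≤ᶠ[atTop] TTF.bnd := by
    filter_upwards [eventually_ge_atTop 4] with N hN
    have hM : Nat.sqrt (N ^ 3) ≠ 0 := by
      have : 0 < Nat.sqrt (N ^ 3) := Nat.sqrt_pos.2 (by positivity)
      omega
    have hE4 : 4 ≤ Fintype.card (DefPair N) := by
      rw [TTF.card_defPair]
      calc 4 ≤ Nat.choose 4 2 := by decide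
        _ ≤ N.choose 2 := Nat.choose_le_choose 2 hN
    have h := TTF.main_bound N (Nat.sqrt (N ^ 3)) hM (by omega) hE4
    rw [hP]
    simp only [TTF.bnd, TTF.lR, TTF.mR]
    exact h
  have hcob : IsCoboundedUnder (· ≤ ·) atTop P :=
    isCoboundedUnder_le_of_le atTop (fun N => by rw [hP]; positivity)
  have hbdd : IsBoundedUnder (· ≤ ·) atTop TTF.bnd :=
    TTF.tendsto_bnd.isBoundedUnder_le
  calc Filter.limsup P atTop ≤ Filter.limsup TTF.bnd atTop :=
        Filter.limsup_le_limsup hev hcob hbdd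
    _ = 2 / 3 := TTF.tendsto_bnd.limsup_eq
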